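/- Fix an integer p ≥ 2, an integer N ≥ 2, positive integers a_1, ..., a_N, and define ν(I) = Σ_{j=1}^r p^{i_1 + ⋯ + i_{j-1}} a_{i_j} and μ(I) = i_1 + ⋯ + i_r for I ∈ {1,...,N}^r. Let M be the set of minimizers of ν. Then the componentwise maximum (max_{J∈M} j_1, ..., max_{J∈M} j_r) lies in M, and it is the unique element of M of maximal weight μ; similarly, the componentwise minimum lies in M and is the unique element of minimal weight. -/

import Mathlib

/-- The valuation `ν(I) = ∑_{j=1}^r p^(i_1 + ⋯ + i_{j-1}) · a_{i_j}` of a tuple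
`I ∈ {1,…,N}^r`, where the entry `I j : Fin N` represents the value `(I j) + 1`. -/
def tupleVal (p : ℕ) {N r : ℕ} (a : Fin N → ℕ) (I : Fin r → Fin N) : ℕ :=
  ∑ j : Fin r, p ^ (∑ l ∈ Finset.Iio j, ((I l : ℕ) + 1)) * a (I j)

/-- The weight `μ(I) = i_1 + ⋯ + i_r` of a tuple `I ∈ {1,…,N}^r`. -/
def tupleWeight {N r : ℕ} (I : Fin r → Fin N) : ℕ :=
  ∑ j : Fin r, ((I j : ℕ) + 1)

/-- Among the minimizers of `ν`, the componentwise maximum is again a minimizer and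
is the unique minimizer of maximal weight; similarly the componentwise minimum is a
minimizer and is the unique minimizer of minimal weight. -/
lemma sum_Iio_succ' {n : ℕ} (f : Fin (n+1) → ℕ) (j : Fin n) :
    ∑ l ∈ Finset.Iio j.succ, f l = f 0 + ∑ l ∈ Finset.Iio j, f l.succ := by
  have h : ∀ (m : ℕ) (g : Fin m → ℕ) (b : Fin m),
      ∑ l ∈ Finset.Iio b, g l = ∑ l : Fin m, if l < b then g l else 0 := by
    intro m g b
    rw [← Finset.sum_filter]
    congr 1
    ext x
    simp
  rw [h _ f j.succ, h _ _ j, Fin.sum_univ_succ]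
  simp [Fin.succ_lt_succ_iff, Fin.succ_pos]

lemma tupleVal_succ (p : ℕ) {N r : ℕ} (a : Fin N → ℕ) (I : Fin (r+1) → Fin N) :
    tupleVal p a I = a (I 0) + p ^ ((I 0 : ℕ) + 1) * tupleVal p a (Fin.tail I) := by
  rw [tupleVal, Fin.sum_univ_succ]
  congr 1
  · rw [show Finset.Iio (0 : Fin (r+1)) = ∅ by simp [Finset.eq_empty_iff_forall_notMem, Fin.bot_eq_zero]]
    simp
  · rw [tupleVal, Finset.mul_sum]
    apply Finset.sum_congr rfl
    intro j _
    rw [sum_Iio_succ' (fun l => (I l : ℕ) + 1) j, pow_add]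
    simp [Fin.tail]
    ring

lemma tupleWeight_succ {N r : ℕ} (I : Fin (r+1) → Fin N) :
    tupleWeight I = ((I 0 : ℕ) + 1) + tupleWeight (Fin.tail I) := by
  rw [tupleWeight, tupleWeight, Fin.sum_univ_succ]
  simp [Fin.tail]

lemma key_max (p : ℕ) (hp : 2 ≤ p) {N : ℕ} (hN : 0 < N) (a : Fin N → ℕ) :
    ∀ r : ℕ, ∃ Imax : Fin r → Fin N,
      (∀ K : Fin r → Fin N, tupleVal p a Imax ≤ tupleVal p a K) ∧
      (∀ J : Fin r → Fin N, (∀ K : Fin r → Fin N, tupleVal p a J ≤ tupleVal p a K) →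
        ∀ α, J α ≤ Imax α) := by
  haveI : NeZero N := ⟨hN.ne'⟩
  intro r
  induction r with
  | zero =>
    refine ⟨fun α => α.elim0, fun K => ?_, fun J _ α => α.elim0⟩
    simp [tupleVal]
  | succ r ih =>
    obtain ⟨Imax, hmin, hdom⟩ := ih
    set m := tupleVal p a Imax with hm
    set g : Fin N → ℕ := fun i => a i + p ^ ((i : ℕ) + 1) * m with hg
    obtain ⟨i0, -, hi0⟩ := Finset.exists_min_image Finset.univ g Finset.univ_nonempty
    set S : Finset (Fin N) := Finset.univ.filter (fun i => ∀ k, g i ≤ g k) with hS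
    have hSne : S.Nonempty := ⟨i0, by
      simp only [hS, Finset.mem_filter, Finset.mem_univ, true_and]
      intro k; exact hi0 k (Finset.mem_univ k)⟩
    set istar := S.max' hSne with histar
    have histarS : istar ∈ S := S.max'_mem hSne
    have hstar : ∀ k, g istar ≤ g k := (Finset.mem_filter.mp histarS).2
    have hvalmax : tupleVal p a (Fin.cons istar Imax) = g istar := by
      rw [tupleVal_succ, Fin.cons_zero, Fin.tail_cons]
    have hppos : ∀ e : ℕ, 0 < p ^ e := fun e => Nat.pow_pos (by omega)
    refine ⟨Fin.cons istar Imax, ?_, ?_⟩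
    · intro K
      rw [hvalmax, tupleVal_succ]
      calc g istar ≤ g (K 0) := hstar (K 0)
        _ ≤ a (K 0) + p ^ ((K 0 : ℕ) + 1) * tupleVal p a (Fin.tail K) := by
            rw [hg]
            exact Nat.add_le_add_left (Nat.mul_le_mul_left _ (hmin (Fin.tail K))) _
    · intro J hJ
      have htail : tupleVal p a (Fin.tail J) ≤ m := by
        by_contra h
        push_neg at h
        have h1 : tupleVal p a (Fin.cons istar Imax) < tupleVal p a J := by
          rw [hvalmax, tupleVal_succ]
          calc g istar ≤ g (J 0) := hstar _
            _ < a (J 0) + p ^ ((J 0 : ℕ) + 1) * tupleVal p a (Fin.tail J) := by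
                rw [hg]
                exact Nat.add_lt_add_left (mul_lt_mul_of_pos_left h (hppos _)) _
        exact absurd (hJ (Fin.cons istar Imax)) (not_le.mpr h1)
      have htailmin : ∀ K' : Fin r → Fin N,
          tupleVal p a (Fin.tail J) ≤ tupleVal p a K' :=
        fun K' => htail.trans (hmin K')
      have htaileq : tupleVal p a (Fin.tail J) = m :=
        le_antisymm htail (hmin (Fin.tail J))
      have hJ0 : g (J 0) = g istar := by
        have h1 : tupleVal p a J = g (J 0) := by
          rw [tupleVal_succ, htaileq, hg]
        have h2 : tupleVal p a J ≤ g istar := hvalmax ▸ hJ (Fin.cons istar Imax)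
        exact le_antisymm (h1 ▸ h2) (hstar _)
      have hJ0le : J 0 ≤ istar := by
        apply S.le_max'
        simp only [hS, Finset.mem_filter, Finset.mem_univ, true_and]
        intro k
        exact hJ0 ▸ hstar k
      intro α
      refine Fin.cases ?_ ?_ α
      · simpa using hJ0le
      · intro β
        have := hdom (Fin.tail J) htailmin β
        simpa [Fin.tail] using this

lemma key_min (p : ℕ) (hp : 2 ≤ p) {N : ℕ} (hN : 0 < N) (a : Fin N → ℕ) :
    ∀ r : ℕ, ∃ Imin : Fin r → Fin N,
      (∀ K : Fin r → Fin N, tupleVal p a Imin ≤ tupleVal p a K) ∧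
      (∀ J : Fin r → Fin N, (∀ K : Fin r → Fin N, tupleVal p a J ≤ tupleVal p a K) →
        ∀ α, Imin α ≤ J α) := by
  haveI : NeZero N := ⟨hN.ne'⟩
  intro r
  induction r with
  | zero =>
    refine ⟨fun α => α.elim0, fun K => ?_, fun J _ α => α.elim0⟩
    simp [tupleVal]
  | succ r ih =>
    obtain ⟨Imin, hmin, hdom⟩ := ih
    set m := tupleVal p a Imin with hm
    set g : Fin N → ℕ := fun i => a i + p ^ ((i : ℕ) + 1) * m with hg
    obtain ⟨i0, -, hi0⟩ := Finset.exists_min_image Finset.univ g Finset.univ_nonempty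
    set S : Finset (Fin N) := Finset.univ.filter (fun i => ∀ k, g i ≤ g k) with hS
    have hSne : S.Nonempty := ⟨i0, by
      simp only [hS, Finset.mem_filter, Finset.mem_univ, true_and]
      intro k; exact hi0 k (Finset.mem_univ k)⟩
    set istar := S.min' hSne with histar
    have histarS : istar ∈ S := S.min'_mem hSne
    have hstar : ∀ k, g istar ≤ g k := (Finset.mem_filter.mp histarS).2
    have hvalmax : tupleVal p a (Fin.cons istar Imin) = g istar := by
      rw [tupleVal_succ, Fin.cons_zero, Fin.tail_cons]
    have hppos : ∀ e : ℕ, 0 < p ^ e := fun e => Nat.pow_pos (by omega)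
    refine ⟨Fin.cons istar Imin, ?_, ?_⟩
    · intro K
      rw [hvalmax, tupleVal_succ]
      calc g istar ≤ g (K 0) := hstar (K 0)
        _ ≤ a (K 0) + p ^ ((K 0 : ℕ) + 1) * tupleVal p a (Fin.tail K) := by
            rw [hg]
            exact Nat.add_le_add_left (Nat.mul_le_mul_left _ (hmin (Fin.tail K))) _
    · intro J hJ
      have htail : tupleVal p a (Fin.tail J) ≤ m := by
        by_contra h
        push_neg at h
        have h1 : tupleVal p a (Fin.cons istar Imin) < tupleVal p a J := by
          rw [hvalmax, tupleVal_succ]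
          calc g istar ≤ g (J 0) := hstar _
            _ < a (J 0) + p ^ ((J 0 : ℕ) + 1) * tupleVal p a (Fin.tail J) := by
                rw [hg]
                exact Nat.add_lt_add_left (mul_lt_mul_of_pos_left h (hppos _)) _
        exact absurd (hJ (Fin.cons istar Imin)) (not_le.mpr h1)
      have htailmin : ∀ K' : Fin r → Fin N,
          tupleVal p a (Fin.tail J) ≤ tupleVal p a K' :=
        fun K' => htail.trans (hmin K')
      have htaileq : tupleVal p a (Fin.tail J) = m :=
        le_antisymm htail (hmin (Fin.tail J))
      have hJ0 : g (J 0) = g istar := by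
        have h1 : tupleVal p a J = g (J 0) := by
          rw [tupleVal_succ, htaileq, hg]
        have h2 : tupleVal p a J ≤ g istar := hvalmax ▸ hJ (Fin.cons istar Imin)
        exact le_antisymm (h1 ▸ h2) (hstar _)
      have hJ0le : istar ≤ J 0 := by
        apply S.min'_le
        simp only [hS, Finset.mem_filter, Finset.mem_univ, true_and]
        intro k
        exact hJ0 ▸ hstar k
      intro α
      refine Fin.cases ?_ ?_ α
      · simpa using hJ0le
      · intro β
        have := hdom (Fin.tail J) htailmin β
        simpa [Fin.tail] using this

theorem extremal_minimizers
    (p N r : ℕ) (hp : 2 ≤ p) (hN : 2 ≤ N) (hr : 1 ≤ r)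
    (a : Fin N → ℕ) (ha : ∀ i, 0 < a i) :
    (∃ Imax : Fin r → Fin N,
        (∀ K : Fin r → Fin N, tupleVal p a Imax ≤ tupleVal p a K) ∧
        (∀ J : Fin r → Fin N, (∀ K : Fin r → Fin N, tupleVal p a J ≤ tupleVal p a K) →
          ∀ α : Fin r, J α ≤ Imax α) ∧
        (∀ J : Fin r → Fin N, (∀ K : Fin r → Fin N, tupleVal p a J ≤ tupleVal p a K) →
          tupleWeight J ≤ tupleWeight Imax) ∧
        (∀ J : Fin r → Fin N, (∀ K : Fin r → Fin N, tupleVal p a J ≤ tupleVal p a K) →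
          tupleWeight J = tupleWeight Imax → J = Imax)) ∧
    (∃ Imin : Fin r → Fin N,
        (∀ K : Fin r → Fin N, tupleVal p a Imin ≤ tupleVal p a K) ∧
        (∀ J : Fin r → Fin N, (∀ K : Fin r → Fin N, tupleVal p a J ≤ tupleVal p a K) →
          ∀ α : Fin r, Imin α ≤ J α) ∧
        (∀ J : Fin r → Fin N, (∀ K : Fin r → Fin N, tupleVal p a J ≤ tupleVal p a K) →
          tupleWeight Imin ≤ tupleWeight J) ∧
        (∀ J : Fin r → Fin N, (∀ K : Fin r → Fin N, tupleVal p a J ≤ tupleVal p a K) →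
          tupleWeight J = tupleWeight Imin → J = Imin)) := by
  have hN0 : 0 < N := by omega
  constructor
  · obtain ⟨Imax, hmin, hdom⟩ := key_max p hp hN0 a r
    have hwle : ∀ J : Fin r → Fin N,
        (∀ K : Fin r → Fin N, tupleVal p a J ≤ tupleVal p a K) →
        tupleWeight J ≤ tupleWeight Imax := by
      intro J hJ
      exact Finset.sum_le_sum fun α _ => by
        have := hdom J hJ α; omega
    refine ⟨Imax, hmin, hdom, hwle, ?_⟩
    intro J hJ hw
    have hle : ∀ α ∈ Finset.univ, ((J α : ℕ) + 1) ≤ ((Imax α : ℕ) + 1) :=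
      fun α _ => by have := hdom J hJ α; omega
    have := (Finset.sum_eq_sum_iff_of_le hle).mp hw
    funext α
    have := this α (Finset.mem_univ α)
    exact Fin.ext (by omega)
  · obtain ⟨Imin, hmin, hdom⟩ := key_min p hp hN0 a r
    have hwle : ∀ J : Fin r → Fin N,
        (∀ K : Fin r → Fin N, tupleVal p a J ≤ tupleVal p a K) →
        tupleWeight Imin ≤ tupleWeight J := by
      intro J hJ
      exact Finset.sum_le_sum fun α _ => by
        have := hdom J hJ α; omega
    refine ⟨Imin, hmin, hdom, hwle, ?_⟩
    intro J hJ hw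
    have hle : ∀ α ∈ Finset.univ, ((Imin α : ℕ) + 1) ≤ ((J α : ℕ) + 1) :=
      fun α _ => by have := hdom J hJ α; omega
    have := (Finset.sum_eq_sum_iff_of_le hle).mp hw.symm
    funext α
    have := this α (Finset.mem_univ α)
    exact Fin.ext (by omega)
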